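/- Let C₁, C₂ ⊆ {0,1}^n be disjoint sets such that no cyclic shift of any element of C₁ belongs to C₂. Let A = { aa : a ∈ C₁ } ⊆ {0,1}^{2n} (words formed by repeating a word of C₁ twice), and for s ≥ 3 let B = { g₁g₂⋯g_s : g_i ∈ C₂ } ⊆ {0,1}^{sn}. Then no word of B contains any word of A as a contiguous substring. -/

import Mathlib

lemma flatten_slice (n : ℕ) : ∀ (L : List (List Bool)) (k : ℕ),
    (∀ l ∈ L, l.length = n) → ((L.flatten).drop (k*n)).take n = L.getD k [] := by
  intro L
  induction L with
  | nil => intro k _; simp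
  | cons l L ih =>
    intro k hlen
    have hl : l.length = n := hlen l (by simp)
    cases k with
    | zero =>
      simp only [Nat.zero_mul, List.drop_zero, List.flatten_cons, List.getD_cons_zero]
      rw [← hl, List.take_left]
    | succ k =>
      have h1 : l.length ≤ (k+1)*n := by rw [hl]; nlinarith
      rw [List.flatten_cons, List.drop_append,
        List.drop_eq_nil_of_le h1, List.nil_append, hl]
      have h2 : (k+1)*n - n = k*n := by rw [Nat.succ_mul]; omega
      rw [h2]
      simpa using ih k (fun l hl => hlen l (by simp [hl]))

theorem stmt_18 (n s : ℕ) (hs : 3 ≤ s)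
    (C₁ C₂ : Set (List Bool))
    (h1len : ∀ w ∈ C₁, w.length = n) (h2len : ∀ w ∈ C₂, w.length = n)
    (hdisj : C₁ ∩ C₂ = ∅)
    (hshift : ∀ a ∈ C₁, ∀ i : ℕ, (a.drop i ++ a.take i) ∉ C₂)
    (A : Set (List Bool)) (hA : A = {w | ∃ a ∈ C₁, w = a ++ a})
    (B : Set (List Bool))
    (hB : B = {w | ∃ f : ℕ → List Bool, (∀ i, 1 ≤ i → i ≤ s → f i ∈ C₂) ∧
      w = ((List.range s).map fun i => f (i + 1)).flatten}) :
    ∀ w ∈ B, ∀ x ∈ A, ¬ x <:+: w := by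
  subst hA hB
  rintro w ⟨f, hf, rfl⟩ x ⟨a, ha, rfl⟩ ⟨u, v, huv⟩
  have han : a.length = n := h1len a ha
  set L := (List.range s).map fun i => f (i + 1) with hL
  have hlenL : ∀ l ∈ L, l.length = n := by
    intro l hl
    simp only [hL, List.mem_map, List.mem_range] at hl
    obtain ⟨i, hi, rfl⟩ := hl
    exact h2len _ (hf (i+1) (by omega) (by omega))
  rcases Nat.eq_zero_or_pos n with hn | hn
  · -- n = 0: a = [] and f 1 ∈ C₂ has length 0, but [] ∉ C₂ by hshift
    have ha0 : a = [] := List.eq_nil_of_length_eq_zero (by omega)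
    have h1 : f 1 ∈ C₂ := hf 1 le_rfl (by omega)
    have : f 1 = [] := List.eq_nil_of_length_eq_zero (by rw [h2len _ h1]; omega)
    have h2 := hshift a ha 0
    rw [ha0] at h2
    simp only [List.drop_nil, List.take_nil, List.nil_append] at h2
    exact h2 (this ▸ h1)
  · set t := u.length with ht
    set q := t / n with hq
    set r := t % n with hr
    have hrn : r < n := Nat.mod_lt _ hn
    have htqr : t = q * n + r := by
      rw [hq, hr, Nat.mul_comm]
      exact (Nat.div_add_mod t n).symm
    have hflen : L.flatten.length = s * n := by
      rw [List.length_flatten]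
      have : L.map List.length = List.replicate s n := by
        rw [List.eq_replicate_iff]
        constructor
        · simp [hL]
        · intro b hb
          simp only [List.mem_map] at hb
          obtain ⟨l, hl, rfl⟩ := hb
          exact hlenL l hl
      rw [this, List.sum_replicate, smul_eq_mul]
    have hwlen : t + 2 * n + v.length = s * n := by
      have := congrArg List.length huv
      simp only [List.length_append, han] at this
      rw [hflen] at this
      omega
    have hq2 : q + 2 ≤ s := by
      have h1 : (q + 2) * n ≤ s * n := by nlinarith
      exact Nat.le_of_mul_le_mul_right h1 hn
    -- the slice at block index q+1
    have key1 : ((L.flatten).drop ((q+1)*n)).take n = f (q + 2) := by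
      rw [flatten_slice n L (q+1) hlenL]
      have hq1 : q + 1 < L.length := by simp [hL]; omega
      rw [List.getD_eq_getElem L [] hq1]
      simp [hL]
    have key2 : ((L.flatten).drop ((q+1)*n)).take n = a.drop (n - r) ++ a.take (n - r) := by
      rw [← huv]
      have e1 : (q+1)*n = u.length + (n - r) := by
        rw [← ht, htqr]; rw [Nat.succ_mul]; omega
      rw [List.append_assoc, List.append_assoc, e1, List.drop_length_add_append]
      rw [List.drop_append]
      have e2 : n - r - a.length = 0 := by omega
      rw [e2, List.drop_zero]
      rw [List.take_append]
      have e3 : (a.drop (n - r)).length = r := by rw [List.length_drop]; omega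
      have e4 : (a.drop (n - r)).take n = a.drop (n - r) :=
        List.take_of_length_le (by omega)
      rw [e4, e3, List.take_append]
      have e5 : n - r - a.length = 0 := by omega
      rw [e5, List.take_zero, List.append_nil]
    have : a.drop (n - r) ++ a.take (n - r) ∈ C₂ := by
      rw [← key2, key1]; exact hf (q+2) (Nat.le_add_left 1 _) hq2
    exact hshift a ha (n - r) this
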